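/- Let G be a finite simple connected graph on n vertices whose edge set E has exactly n elements (so that G is a uni-cyclic graph U_{n,m}), and let c be a cycle in G of length m (3 ≤ m ≤ n). For each i, let f_i denote the number of subsets of E of cardinality i+1 contained in the edge set of some spanning tree of G, and set f_{−1} = 1. Define the h-vector of the Stanley–Reisner ring k[Δ_s(U_{n,m})] by h_k = Σ_{i=0}^{k} (−1)^{k−i} C(n−1−i, k−i) f_{i−1}. Then h_k = 0 for k > n − 1, h_k = Σ_{i=0}^{k} (−1)^{k−i} C(n−1−i, k−i) C(n, i) for 0 ≤ k ≤ m − 1, and h_k = Σ_{i=0}^{k} (−1)^{k−i} C(n−1−i, k−i) [C(n, i) − C(n−m, i−m)] for m − 1 < k ≤ n − 1. -/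

import Mathlib

/-- `F` is a face of the spanning simplicial complex `Δ_s(G)`: `F` is contained
in the edge set of some spanning tree of `G`. -/
def IsSpanningFace {V : Type*} [Fintype V] [DecidableEq V]
    (G : SimpleGraph V) [DecidableRel G.Adj] (F : Finset (Sym2 V)) : Prop :=
  ∃ T : Finset (Sym2 V), T ⊆ G.edgeFinset ∧
    (SimpleGraph.fromEdgeSet (↑T : Set (Sym2 V))).IsTree ∧ F ⊆ T

/-- The binomial coefficient `C(a, b)` for integer arguments, with the
convention that `C(a, b) = 0` when `b < 0` or `b > a`. -/
def intChoose (a b : ℤ) : ℤ :=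
  if 0 ≤ b ∧ b ≤ a then (a.toNat.choose b.toNat : ℤ) else 0

section Auxiliary

open SimpleGraph Finset

private lemma reach_transfer {V : Type*} {G H : SimpleGraph V}
    (hadj : ∀ a b, G.Adj a b → H.Reachable a b) :
    ∀ {u w : V}, G.Reachable u w → H.Reachable u w := by
  intro u w hr
  obtain ⟨p⟩ := hr
  induction p with
  | nil => exact Reachable.refl _
  | cons h q ih => exact (hadj _ _ h).trans ih

private lemma connected_delete {V : Type*} {G : SimpleGraph V} (hconn : G.Connected)
    {u : V} {c : G.Walk u u} (hc : c.IsCycle) {e : Sym2 V} (he : e ∈ c.edges) :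
    (G \ SimpleGraph.fromEdgeSet {e}).Connected := by
  induction e using Sym2.ind with
  | _ a b =>
    have hre : (G \ SimpleGraph.fromEdgeSet {s(a, b)}).Reachable a b :=
      (SimpleGraph.adj_and_reachable_delete_edges_iff_exists_cycle.mpr ⟨u, c, hc, he⟩).2
    have hadj : ∀ x y, G.Adj x y → (G \ SimpleGraph.fromEdgeSet {s(a, b)}).Reachable x y := by
      intro x y hxy
      by_cases hxe : s(x, y) = s(a, b)
      · rw [Sym2.eq_iff] at hxe
        rcases hxe with ⟨rfl, rfl⟩ | ⟨rfl, rfl⟩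
        · exact hre
        · exact hre.symm
      · refine SimpleGraph.Adj.reachable ?_
        simp only [SimpleGraph.sdiff_adj, SimpleGraph.fromEdgeSet_adj, Set.mem_singleton_iff]
        exact ⟨hxy, fun h => hxe h.1⟩
    have : Nonempty V := hconn.nonempty
    exact ⟨fun x y => reach_transfer hadj (hconn.preconnected x y)⟩

private lemma card_le_ncard_edgeSet {V : Type*} [Fintype V] :
    ∀ (N : ℕ) (G : SimpleGraph V), G.edgeSet.ncard ≤ N → G.Connected →
      Fintype.card V ≤ G.edgeSet.ncard + 1 := by
  intro N
  induction N with
  | zero =>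
    intro G hN hconn
    by_cases hac : G.IsAcyclic
    · classical
      have ht : G.IsTree := ⟨hconn, hac⟩
      have := ht.card_edgeFinset
      have hnc : G.edgeSet.ncard = G.edgeFinset.card := by
        rw [← SimpleGraph.coe_edgeFinset, Set.ncard_coe_finset]
      omega
    · rw [SimpleGraph.IsAcyclic] at hac
      push_neg at hac
      obtain ⟨w, cw, hcw⟩ := hac
      have h3 := hcw.three_le_length
      have hlen : cw.edges ≠ [] := by
        have := cw.length_edges
        intro h; rw [h] at this; simp at this; omega
      obtain ⟨e, he⟩ := List.exists_mem_of_ne_nil _ hlen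
      have he' : e ∈ G.edgeSet := cw.edges_subset_edgeSet he
      have : 0 < G.edgeSet.ncard :=
        (Set.ncard_pos G.edgeSet.toFinite).mpr ⟨e, he'⟩
      omega
  | succ N ih =>
    intro G hN hconn
    by_cases hac : G.IsAcyclic
    · classical
      have ht : G.IsTree := ⟨hconn, hac⟩
      have := ht.card_edgeFinset
      have hnc : G.edgeSet.ncard = G.edgeFinset.card := by
        rw [← SimpleGraph.coe_edgeFinset, Set.ncard_coe_finset]
      omega
    · rw [SimpleGraph.IsAcyclic] at hac
      push_neg at hac
      obtain ⟨w, cw, hcw⟩ := hac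
      have h3 := hcw.three_le_length
      have hlen : cw.edges ≠ [] := by
        have := cw.length_edges
        intro h; rw [h] at this; simp at this; omega
      obtain ⟨e, he⟩ := List.exists_mem_of_ne_nil _ hlen
      have he' : e ∈ G.edgeSet := cw.edges_subset_edgeSet he
      have hconn' := connected_delete hconn hcw he
      have hes : (G \ SimpleGraph.fromEdgeSet {e}).edgeSet = G.edgeSet \ {e} := by
        rw [SimpleGraph.edgeSet_sdiff, SimpleGraph.edgeSet_fromEdgeSet,
          SimpleGraph.edgeSet_sdiff_sdiff_isDiag]
      have hnc : (G \ SimpleGraph.fromEdgeSet {e}).edgeSet.ncard = G.edgeSet.ncard - 1 := by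
        rw [hes, Set.ncard_diff_singleton_of_mem he']
      have hpos : 0 < G.edgeSet.ncard :=
        (Set.ncard_pos G.edgeSet.toFinite).mpr ⟨e, he'⟩
      have := ih (G \ SimpleGraph.fromEdgeSet {e}) (by omega) hconn'
      omega

private lemma delete_isTree {V : Type*} [Fintype V] {G : SimpleGraph V} (hconn : G.Connected)
    (hcard : G.edgeSet.ncard = Fintype.card V)
    {u : V} {c : G.Walk u u} (hc : c.IsCycle) {e : Sym2 V} (he : e ∈ c.edges) :
    (G \ SimpleGraph.fromEdgeSet {e}).IsTree := by
  set G' := G \ SimpleGraph.fromEdgeSet {e} with hG'def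
  have hconn' : G'.Connected := connected_delete hconn hc he
  have he' : e ∈ G.edgeSet := c.edges_subset_edgeSet he
  have hes : G'.edgeSet = G.edgeSet \ {e} := by
    rw [hG'def, SimpleGraph.edgeSet_sdiff, SimpleGraph.edgeSet_fromEdgeSet,
      SimpleGraph.edgeSet_sdiff_sdiff_isDiag]
  refine ⟨hconn', ?_⟩
  intro w cw hcw
  have h3 := hcw.three_le_length
  have hlen : cw.edges ≠ [] := by
    have := cw.length_edges
    intro h; rw [h] at this; simp at this; omega
  obtain ⟨e'', he''⟩ := List.exists_mem_of_ne_nil _ hlen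
  have he''1 : e'' ∈ G'.edgeSet := cw.edges_subset_edgeSet he''
  have hconn'' := connected_delete hconn' hcw he''
  have hes'' : (G' \ SimpleGraph.fromEdgeSet {e''}).edgeSet = G'.edgeSet \ {e''} := by
    rw [SimpleGraph.edgeSet_sdiff, SimpleGraph.edgeSet_fromEdgeSet,
      SimpleGraph.edgeSet_sdiff_sdiff_isDiag]
  have hn1 : G'.edgeSet.ncard = G.edgeSet.ncard - 1 := by
    rw [hes, Set.ncard_diff_singleton_of_mem he']
  have hn2 : (G' \ SimpleGraph.fromEdgeSet {e''}).edgeSet.ncard = G'.edgeSet.ncard - 1 := by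
    rw [hes'', Set.ncard_diff_singleton_of_mem he''1]
  have hp1 : 0 < G.edgeSet.ncard := (Set.ncard_pos G.edgeSet.toFinite).mpr ⟨e, he'⟩
  have hp2 : 0 < G'.edgeSet.ncard := (Set.ncard_pos G'.edgeSet.toFinite).mpr ⟨e'', he''1⟩
  have hb := card_le_ncard_edgeSet _ (G' \ SimpleGraph.fromEdgeSet {e''}) le_rfl hconn''
  omega

private lemma face_iff {V : Type*} [Fintype V] [DecidableEq V]
    {G : SimpleGraph V} [DecidableRel G.Adj] (hconn : G.Connected)
    (hcard : G.edgeSet.ncard = Fintype.card V)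
    {u : V} {c : G.Walk u u} (hc : c.IsCycle)
    (F : Finset (Sym2 V)) :
    IsSpanningFace G F ↔ F ⊆ G.edgeFinset ∧ ¬ c.edges.toFinset ⊆ F := by
  constructor
  · rintro ⟨T, hTE, hTree, hFT⟩
    refine ⟨hFT.trans hTE, fun hCF => ?_⟩
    have hed : ∀ e ∈ c.edges, e ∈ (SimpleGraph.fromEdgeSet (↑T : Set (Sym2 V))).edgeSet := by
      intro e he
      rw [SimpleGraph.edgeSet_fromEdgeSet]
      exact ⟨hFT (hCF (List.mem_toFinset.mpr he)),
        G.not_isDiag_of_mem_edgeSet (c.edges_subset_edgeSet he)⟩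
    exact hTree.IsAcyclic _ (hc.transfer hed)
  · rintro ⟨hFE, hCF⟩
    rw [Finset.not_subset] at hCF
    obtain ⟨e, heC, heF⟩ := hCF
    have heC' : e ∈ c.edges := List.mem_toFinset.mp heC
    refine ⟨G.edgeFinset.erase e, Finset.erase_subset _ _, ?_, ?_⟩
    · have hTg : SimpleGraph.fromEdgeSet (↑(G.edgeFinset.erase e) : Set (Sym2 V)) =
          G \ SimpleGraph.fromEdgeSet {e} := by
        ext a b
        simp only [SimpleGraph.fromEdgeSet_adj, Finset.coe_erase,
          SimpleGraph.coe_edgeFinset, Set.mem_diff, Set.mem_singleton_iff,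
          SimpleGraph.sdiff_adj, SimpleGraph.mem_edgeSet]
        constructor
        · rintro ⟨⟨ha, hne⟩, hab⟩; exact ⟨ha, fun h => hne h.1⟩
        · rintro ⟨ha, hne⟩; exact ⟨⟨ha, fun h => hne ⟨h, ha.ne⟩⟩, ha.ne⟩
      rw [hTg]
      exact delete_isTree hconn hcard hc heC'
    · intro x hx
      exact Finset.mem_erase.mpr ⟨fun h => heF (h ▸ hx), hFE hx⟩

private lemma intChoose_coe (a b : ℕ) : intChoose a b = (a.choose b : ℤ) := by
  unfold intChoose
  by_cases h : b ≤ a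
  · rw [if_pos ⟨Int.natCast_nonneg b, by exact_mod_cast h⟩]
    simp
  · rw [if_neg (by push_neg; intro _; exact_mod_cast Nat.lt_of_not_le h),
      Nat.choose_eq_zero_of_lt (Nat.lt_of_not_le h)]
    simp

private lemma count_subsets {V : Type*} [DecidableEq V]
    (E C : Finset (Sym2 V)) (hCE : C ⊆ E) (n m i : ℕ)
    (hE : E.card = n) (hC : C.card = m) :
    (((E.powersetCard i).filter (fun F => ¬ C ⊆ F)).card : ℤ)
      = intChoose n i - intChoose ((n : ℤ) - m) ((i : ℤ) - m) := by
  have hmn : m ≤ n := hC ▸ hE ▸ Finset.card_le_card hCE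
  have hsplit := Finset.card_filter_add_card_filter_not
    (s := E.powersetCard i) (p := fun F => C ⊆ F)
  have hP : (E.powersetCard i).card = n.choose i := by rw [Finset.card_powersetCard, hE]
  by_cases him : m ≤ i
  · have hbij : ((E.powersetCard i).filter (fun F => C ⊆ F)).card
        = ((E \ C).powersetCard (i - m)).card := by
      apply Finset.card_bij' (fun F _ => F \ C) (fun S _ => S ∪ C)
      · intro F hF
        simp only [Finset.mem_filter, Finset.mem_powersetCard] at hF
        obtain ⟨⟨hFE, hFc⟩, hCF⟩ := hF
        rw [Finset.mem_powersetCard]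
        constructor
        · intro x hx
          rw [Finset.mem_sdiff] at hx ⊢
          exact ⟨hFE hx.1, hx.2⟩
        · rw [Finset.card_sdiff_of_subset hCF, hFc, hC]
      · intro S hS
        rw [Finset.mem_powersetCard] at hS
        obtain ⟨hSE, hSc⟩ := hS
        have hdisj : Disjoint S C := by
          rw [Finset.disjoint_left]
          intro x hxS hxC
          exact (Finset.mem_sdiff.mp (hSE hxS)).2 hxC
        rw [Finset.mem_filter, Finset.mem_powersetCard]
        refine ⟨⟨?_, ?_⟩, Finset.subset_union_right⟩
        · intro x hx
          rcases Finset.mem_union.mp hx with h | h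
          · exact (Finset.mem_sdiff.mp (hSE h)).1
          · exact hCE h
        · rw [Finset.card_union_of_disjoint hdisj, hSc, hC]
          omega
      · intro F hF
        simp only [Finset.mem_filter] at hF
        exact Finset.sdiff_union_of_subset hF.2
      · intro S hS
        rw [Finset.mem_powersetCard] at hS
        ext x
        simp only [Finset.mem_sdiff, Finset.mem_union]
        constructor
        · rintro ⟨h | h, hxC⟩
          · exact h
          · exact absurd h hxC
        · intro hx
          exact ⟨Or.inl hx, (Finset.mem_sdiff.mp (hS.1 hx)).2⟩
    have hEC : (E \ C).card = n - m := by rw [Finset.card_sdiff_of_subset hCE, hE, hC]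
    have hA : ((E.powersetCard i).filter (fun F => C ⊆ F)).card = (n - m).choose (i - m) := by
      rw [hbij, Finset.card_powersetCard, hEC]
    have hle : ((E.powersetCard i).filter (fun F => ¬ C ⊆ F)).card
        = n.choose i - (n - m).choose (i - m) := by omega
    have hle2 : (n - m).choose (i - m) ≤ n.choose i := by omega
    rw [hle, Nat.cast_sub hle2, intChoose_coe,
      show ((n : ℤ) - m) = ((n - m : ℕ) : ℤ) by omega,
      show ((i : ℤ) - m) = ((i - m : ℕ) : ℤ) by omega, intChoose_coe]
  · have hA : ((E.powersetCard i).filter (fun F => C ⊆ F)) = ∅ := by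
      rw [Finset.filter_eq_empty_iff]
      intro F hF hCF
      rw [Finset.mem_powersetCard] at hF
      have := Finset.card_le_card hCF
      omega
    have h0 : intChoose ((n : ℤ) - m) ((i : ℤ) - m) = 0 := by
      rw [intChoose, if_neg (by omega)]
    rw [h0, intChoose_coe]
    rw [hA, Finset.card_empty] at hsplit
    omega

end Auxiliary

/-- **`h`-vector of `k[Δ_s(U_{n,m})]`.**
Let `G` be a uni-cyclic graph `U_{n,m}` (a finite simple connected graph on `n`
vertices with exactly `n` edges) with cycle of length `m` (`3 ≤ m ≤ n`). Let
`f i` (for `i ≥ 0`) be the number of faces of `Δ_s(U_{n,m})` of cardinality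
`i + 1`, with `f (-1) = 1`, and let
`h k = ∑_{i=0}^{k} (-1)^{k-i} C(n-1-i, k-i) f (i-1)` be the `h`-vector of the
Stanley–Reisner ring `k[Δ_s(U_{n,m})]`. Then `h k = 0` for `k > n - 1`,
`h k = ∑_{i=0}^{k} (-1)^{k-i} C(n-1-i, k-i) C(n, i)` for `k ≤ m - 1`, and
`h k = ∑_{i=0}^{k} (-1)^{k-i} C(n-1-i, k-i) (C(n, i) - C(n-m, i-m))` for
`m - 1 < k ≤ n - 1`. -/
theorem hvector_of_unicyclic
    {V : Type*} [Fintype V] [DecidableEq V] (n m : ℕ)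
    (hm3 : 3 ≤ m) (hmn : m ≤ n)
    (G : SimpleGraph V) [DecidableRel G.Adj]
    (hconn : G.Connected)
    (hV : Fintype.card V = n)
    (hE : G.edgeFinset.card = n)
    (v : V) (c : G.Walk v v) (hc : c.IsCycle) (hmc : c.length = m)
    (f : ℤ → ℤ)
    (hfneg : f (-1) = 1)
    (hf : ∀ i : ℕ, f i =
      ({F : Finset (Sym2 V) | IsSpanningFace G F ∧ F.card = i + 1}.ncard : ℤ))
    (h : ℕ → ℤ)
    (hh : ∀ k : ℕ, h k = ∑ i ∈ Finset.range (k + 1),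
      (-1 : ℤ) ^ (k - i) * intChoose ((n : ℤ) - 1 - i) ((k : ℤ) - i) * f ((i : ℤ) - 1)) :
    (∀ k : ℕ, n - 1 < k → h k = 0) ∧
    (∀ k : ℕ, k ≤ m - 1 → h k = ∑ i ∈ Finset.range (k + 1),
      (-1 : ℤ) ^ (k - i) * intChoose ((n : ℤ) - 1 - i) ((k : ℤ) - i) *
        intChoose (n : ℤ) (i : ℤ)) ∧
    (∀ k : ℕ, m - 1 < k → k ≤ n - 1 → h k = ∑ i ∈ Finset.range (k + 1),
      (-1 : ℤ) ^ (k - i) * intChoose ((n : ℤ) - 1 - i) ((k : ℤ) - i) *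
        (intChoose (n : ℤ) (i : ℤ) - intChoose ((n : ℤ) - m) ((i : ℤ) - m))) := by
  have hcard : G.edgeSet.ncard = Fintype.card V := by
    rw [← SimpleGraph.coe_edgeFinset, Set.ncard_coe_finset, hE, hV]
  set C := c.edges.toFinset with hCdef
  have hCcard : C.card = m := by
    rw [hCdef, List.toFinset_card_of_nodup hc.edges_nodup, c.length_edges, hmc]
  have hCE : C ⊆ G.edgeFinset := by
    intro e he
    exact SimpleGraph.mem_edgeFinset.mpr (c.edges_subset_edgeSet (List.mem_toFinset.mp he))
  have key : ∀ i : ℕ, f ((i : ℤ) - 1)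
      = intChoose (n : ℤ) (i : ℤ) - intChoose ((n : ℤ) - m) ((i : ℤ) - m) := by
    intro i
    cases i with
    | zero =>
      have h1 : intChoose (n : ℤ) ((0 : ℕ) : ℤ) = 1 := by
        rw [intChoose, if_pos (by constructor <;> omega)]
        simp
      have h2 : intChoose ((n : ℤ) - m) (((0 : ℕ) : ℤ) - m) = 0 := by
        rw [intChoose, if_neg (by omega)]
      have h3 : (((0 : ℕ) : ℤ)) - 1 = -1 := by norm_num
      rw [h3, hfneg, h1, h2]
      ring
    | succ j =>
      have h3 : (((j + 1 : ℕ)) : ℤ) - 1 = (j : ℤ) := by push_cast; ring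
      rw [h3, hf j]
      have hset : {F : Finset (Sym2 V) | IsSpanningFace G F ∧ F.card = j + 1}
          = ↑((G.edgeFinset.powersetCard (j + 1)).filter (fun F => ¬ C ⊆ F)) := by
        ext F
        simp only [Set.mem_setOf_eq, Finset.coe_filter, Finset.mem_powersetCard]
        rw [face_iff hconn hcard hc F]
        tauto
      rw [hset, Set.ncard_coe_finset]
      have := count_subsets G.edgeFinset C hCE n m (j + 1) hE hCcard
      exact_mod_cast this
  refine ⟨?_, ?_, ?_⟩
  · intro k hk
    rw [hh]
    apply Finset.sum_eq_zero
    intro i hi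
    rw [Finset.mem_range] at hi
    have h0 : intChoose ((n : ℤ) - 1 - i) ((k : ℤ) - i) = 0 := by
      rw [intChoose, if_neg (by omega)]
    rw [h0, mul_zero, zero_mul]
  · intro k hk
    rw [hh]
    apply Finset.sum_congr rfl
    intro i hi
    rw [Finset.mem_range] at hi
    rw [key i]
    have h0 : intChoose ((n : ℤ) - m) ((i : ℤ) - m) = 0 := by
      rw [intChoose, if_neg (by omega)]
    rw [h0]
    ring
  · intro k _ _
    rw [hh]
    exact Finset.sum_congr rfl fun i _ => by rw [key i]
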